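/- Define η = Id − A_1∘π − ξ∘φ on S^2V ⊗ V. Then π∘η = 0, φ∘η = 0, and η restricts to the identity on ker φ ∩ ker π; consequently S^2V ⊗ V = Im A_1 ⊕ (ker φ ∩ ker π) ⊕ Im ξ, i.e. S^2V ⊗ V ≅ S^3V ⊕ A' ⊕ V as Sp(V,ω)-modules, where A' = ker φ ∩ ker π. -/

import Mathlib

/- Koszul differential A_{p,q} : SᵖV ⊗ Λ^{q-1}V → S^{p-1}V ⊗ ΛᵠV satisfies
   A_{p-1,q+1} ∘ A_{p,q} = 0.  We model the symmetric algebra of V = ℝᵐ as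
   `MvPolynomial (Fin m) ℝ` (products of linear forms are the decomposable
   symmetric tensors) and the exterior algebra by `ExteriorAlgebra`.  The
   (total) Koszul map `A` is any linear map satisfying the defining formula on
   decomposable elements; these span everything, so `A` is the Koszul
   differential and the claim is `A ∘ A = 0`. -/

open TensorProduct

set_option synthInstance.maxHeartbeats 1000000
set_option maxHeartbeats 1000000

noncomputable section

/-- A vector of `ℝᵐ` viewed as a degree-one element of the symmetric algebra. -/
def lin {m : ℕ} (v : Fin m → ℝ) : MvPolynomial (Fin m) ℝ :=
  ∑ i, MvPolynomial.C (v i) * MvPolynomial.X i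

/-- The decomposable symmetric tensor `u 0 ⋯ u (p-1) ∈ SᵖV`. -/
def symProd {m p : ℕ} (u : Fin p → Fin m → ℝ) : MvPolynomial (Fin m) ℝ :=
  ∏ i, lin (u i)

/-- The decomposable alternating tensor `v 0 ∧ ⋯ ∧ v (q-1) ∈ ΛᵠV`. -/
def wdg {m q : ℕ} (v : Fin q → Fin m → ℝ) : ExteriorAlgebra ℝ (Fin m → ℝ) :=
  (List.ofFn fun j => ExteriorAlgebra.ι ℝ (v j)).prod

/-- The model for `⊕_{p,q} SᵖV ⊗ ΛᵠV`. -/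
abbrev MM (m : ℕ) :=
  MvPolynomial (Fin m) ℝ ⊗[ℝ] ExteriorAlgebra ℝ (Fin m → ℝ)

/-- The decomposable element `u 0 ⋯ u (p-1) ⊗ v 0 ∧ ⋯ ∧ v (q-1)` of `SᵖV ⊗ ΛᵠV`. -/
def dec {m p q : ℕ} (u : Fin p → Fin m → ℝ) (v : Fin q → Fin m → ℝ) : MM m :=
  symProd u ⊗ₜ[ℝ] wdg v

/-- The subspace `SᵖV ⊗ ΛᵠV` of the model, spanned by the decomposable
elements. -/
def piece (m p q : ℕ) : Submodule ℝ (MM m) :=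
  Submodule.span ℝ
    {x | ∃ u : Fin p → Fin m → ℝ, ∃ v : Fin q → Fin m → ℝ, x = dec u v}

/-- `S³V` inside the symmetric algebra: the span of products of three linear
forms. -/
def S3 (m : ℕ) : Submodule ℝ (MvPolynomial (Fin m) ℝ) :=
  Submodule.span ℝ
    {x | ∃ u : Fin 3 → Fin m → ℝ, x = lin (u 0) * lin (u 1) * lin (u 2)}

/-- `ξ : V → S²V ⊗ V` built from a symplectic basis `e`. -/
def xiF {n : ℕ} (e : Fin (n + n) → Fin (n + n) → ℝ) (v : Fin (n + n) → ℝ) :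
    MM (n + n) :=
  (1 / (2 * (n : ℝ) + 1)) • ∑ i : Fin n,
    ((lin (e (Fin.castAdd n i)) * lin v) ⊗ₜ[ℝ]
        ExteriorAlgebra.ι ℝ (e (Fin.natAdd n i)) -
      (lin (e (Fin.natAdd n i)) * lin v) ⊗ₜ[ℝ]
        ExteriorAlgebra.ι ℝ (e (Fin.castAdd n i)))

/-- `η = Id − A₁∘π − ξ∘φ` on `S²V ⊗ V` satisfies `π∘η = 0`, `φ∘η = 0`, is the
identity on `ker φ ∩ ker π`, and yields the `Sp(V,ω)`-module decomposition
`S²V ⊗ V = Im A₁ ⊕ (ker φ ∩ ker π) ⊕ Im ξ ≅ S³V ⊕ 𝒜' ⊕ V`. -/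
theorem stmt7 (n : ℕ)
    (ω : (Fin (n + n) → ℝ) →ₗ[ℝ] (Fin (n + n) → ℝ) →ₗ[ℝ] ℝ)
    (halt : ∀ x, ω x x = 0)
    (hnd : ∀ x, (∀ y, ω x y = 0) → x = 0)
    (e : Fin (n + n) → Fin (n + n) → ℝ)
    (hb : ∃ b : Module.Basis (Fin (n + n)) ℝ (Fin (n + n) → ℝ), ⇑b = e)
    (hee : ∀ i j : Fin n, ω (e (Fin.castAdd n i)) (e (Fin.castAdd n j)) = 0)
    (hef : ∀ i j : Fin n, ω (e (Fin.castAdd n i)) (e (Fin.natAdd n j)) =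
      if i = j then 1 else 0)
    (hff : ∀ i j : Fin n, ω (e (Fin.natAdd n i)) (e (Fin.natAdd n j)) = 0)
    (A₁ : MvPolynomial (Fin (n + n)) ℝ →ₗ[ℝ] MM (n + n))
    (hA₁ : ∀ u₁ u₂ u₃ : Fin (n + n) → ℝ,
      A₁ (lin u₁ * lin u₂ * lin u₃) =
        (lin u₂ * lin u₃) ⊗ₜ[ℝ] ExteriorAlgebra.ι ℝ u₁ +
        (lin u₁ * lin u₃) ⊗ₜ[ℝ] ExteriorAlgebra.ι ℝ u₂ +
        (lin u₁ * lin u₂) ⊗ₜ[ℝ] ExteriorAlgebra.ι ℝ u₃)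
    (π : MM (n + n) →ₗ[ℝ] MvPolynomial (Fin (n + n)) ℝ)
    (hπ : ∀ u₁ u₂ v : Fin (n + n) → ℝ,
      π ((lin u₁ * lin u₂) ⊗ₜ[ℝ] ExteriorAlgebra.ι ℝ v) =
        (1 / 3 : ℝ) • (lin u₁ * lin u₂ * lin v))
    (φ : MM (n + n) →ₗ[ℝ] (Fin (n + n) → ℝ))
    (hφ : ∀ u₁ u₂ v : Fin (n + n) → ℝ,
      φ ((lin u₁ * lin u₂) ⊗ₜ[ℝ] ExteriorAlgebra.ι ℝ v) =
        ω u₁ v • u₂ + ω u₂ v • u₁)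
    (ξ : (Fin (n + n) → ℝ) →ₗ[ℝ] MM (n + n))
    (hξ : ∀ v, ξ v = xiF e v) :
    (∀ x ∈ piece (n + n) 2 1,
      π (((LinearMap.id : MM (n + n) →ₗ[ℝ] MM (n + n)) - A₁ ∘ₗ π - ξ ∘ₗ φ) x) = 0) ∧
    (∀ x ∈ piece (n + n) 2 1,
      φ (((LinearMap.id : MM (n + n) →ₗ[ℝ] MM (n + n)) - A₁ ∘ₗ π - ξ ∘ₗ φ) x) = 0) ∧
    (∀ x ∈ piece (n + n) 2 1, φ x = 0 → π x = 0 →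
      ((LinearMap.id : MM (n + n) →ₗ[ℝ] MM (n + n)) - A₁ ∘ₗ π - ξ ∘ₗ φ) x = x) ∧
    (Submodule.map A₁ (S3 (n + n)) ⊔
      (piece (n + n) 2 1 ⊓ LinearMap.ker φ ⊓ LinearMap.ker π) ⊔
      LinearMap.range ξ = piece (n + n) 2 1) ∧
    (Submodule.map A₁ (S3 (n + n)) ⊓
      ((piece (n + n) 2 1 ⊓ LinearMap.ker φ ⊓ LinearMap.ker π) ⊔
        LinearMap.range ξ) = ⊥) ∧
    ((piece (n + n) 2 1 ⊓ LinearMap.ker φ ⊓ LinearMap.ker π) ⊓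
      (Submodule.map A₁ (S3 (n + n)) ⊔ LinearMap.range ξ) = ⊥) ∧
    (LinearMap.range ξ ⊓
      (Submodule.map A₁ (S3 (n + n)) ⊔
        (piece (n + n) 2 1 ⊓ LinearMap.ker φ ⊓ LinearMap.ker π)) = ⊥) := by
  obtain ⟨b, hbe⟩ := hb
  -- skew-symmetry
  have hskew : ∀ x y, ω x y = -ω y x := by
    intro x y
    have h := halt (x + y)
    simp only [map_add, LinearMap.add_apply, halt] at h
    linarith
  have hfe : ∀ i j : Fin n, ω (e (Fin.natAdd n i)) (e (Fin.castAdd n j)) =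
      -(if j = i then 1 else 0) := by
    intro i j; rw [hskew, hef]
  have hc : (2 * (n : ℝ) + 1) ≠ 0 := by positivity
  -- the basis reproduction identity
  have key : ∀ v : Fin (n + n) → ℝ,
      (∑ i : Fin n, (ω v (e (Fin.natAdd n i)) • e (Fin.castAdd n i)
        - ω v (e (Fin.castAdd n i)) • e (Fin.natAdd n i))) = v := by
    intro v
    set S := ∑ i : Fin n, (ω v (e (Fin.natAdd n i)) • e (Fin.castAdd n i)
        - ω v (e (Fin.castAdd n i)) • e (Fin.natAdd n i)) with hS
    have hx : v - S = 0 := by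
      apply hnd
      have hyb : ∀ j, ω (v - S) (e j) = 0 := by
        intro j
        refine Fin.addCases (motive := fun j => ω (v - S) (e j) = 0) ?_ ?_ j
        · intro k
          simp only [hS, map_sub, map_sum, map_smul, LinearMap.sub_apply,
            LinearMap.sum_apply, LinearMap.smul_apply, smul_eq_mul, hee, hfe,
            mul_ite, mul_one, mul_zero, mul_neg]
          simp [Finset.sum_ite_eq]
        · intro k
          simp only [hS, map_sub, map_sum, map_smul, LinearMap.sub_apply,
            LinearMap.sum_apply, LinearMap.smul_apply, smul_eq_mul, hff, hef,
            mul_ite, mul_one, mul_zero, mul_neg]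
          simp [Finset.sum_ite_eq']
      intro y
      rw [← b.sum_repr y, map_sum]
      simp only [map_smul, smul_eq_mul, hbe]
      simp only [hyb, mul_zero, Finset.sum_const_zero]
    have := sub_eq_zero.mp hx
    exact this.symm
  -- φ ∘ ξ = id
  have hφξ : ∀ v, φ (ξ v) = v := by
    intro v
    rw [hξ]
    unfold xiF
    rw [map_smul, map_sum]
    have h0 : ∀ i : Fin n,
        φ ((lin (e (Fin.castAdd n i)) * lin v) ⊗ₜ[ℝ]
              ExteriorAlgebra.ι ℝ (e (Fin.natAdd n i)) -
            (lin (e (Fin.natAdd n i)) * lin v) ⊗ₜ[ℝ]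
              ExteriorAlgebra.ι ℝ (e (Fin.castAdd n i))) =
          (2 : ℝ) • v + (ω v (e (Fin.natAdd n i)) • e (Fin.castAdd n i)
            - ω v (e (Fin.castAdd n i)) • e (Fin.natAdd n i)) := by
      intro i
      rw [map_sub, hφ, hφ, hef, hfe]
      simp only [eq_self_iff_true, if_true]
      module
    rw [Finset.sum_congr rfl (fun i _ => h0 i), Finset.sum_add_distrib,
      Finset.sum_const, key, Finset.card_univ, Fintype.card_fin,
      ← Nat.cast_smul_eq_nsmul ℝ, smul_smul]
    have h1 : ((n : ℝ) * 2) • v + v = (2 * (n : ℝ) + 1) • v := by module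
    rw [h1, smul_smul, one_div, inv_mul_cancel₀ hc, one_smul]
  -- π ∘ ξ = 0
  have hπξ : ∀ v, π (ξ v) = 0 := by
    intro v
    rw [hξ]
    unfold xiF
    rw [map_smul, map_sum]
    have h0 : ∀ i : Fin n,
        π ((lin (e (Fin.castAdd n i)) * lin v) ⊗ₜ[ℝ]
              ExteriorAlgebra.ι ℝ (e (Fin.natAdd n i)) -
            (lin (e (Fin.natAdd n i)) * lin v) ⊗ₜ[ℝ]
              ExteriorAlgebra.ι ℝ (e (Fin.castAdd n i))) = 0 := by
      intro i
      rw [map_sub, hπ, hπ,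
        show lin (e (Fin.castAdd n i)) * lin v * lin (e (Fin.natAdd n i)) =
          lin (e (Fin.natAdd n i)) * lin v * lin (e (Fin.castAdd n i)) from by ring]
      simp
    rw [Finset.sum_congr rfl (fun i _ => h0 i)]
    simp
  -- π ∘ A₁ = id on S3
  have hπA : ∀ s ∈ S3 (n + n), π (A₁ s) = s := by
    intro s hs
    induction hs using Submodule.span_induction with
    | mem x hx =>
      obtain ⟨u, rfl⟩ := hx
      rw [hA₁, map_add, map_add, hπ, hπ, hπ,
        show lin (u 1) * lin (u 2) * lin (u 0) = lin (u 0) * lin (u 1) * lin (u 2) from by ring,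
        show lin (u 0) * lin (u 2) * lin (u 1) = lin (u 0) * lin (u 1) * lin (u 2) from by ring,
        ← add_smul, ← add_smul]
      norm_num
    | zero => simp
    | add x y _ _ h1 h2 => rw [map_add, map_add, h1, h2]
    | smul c x _ h => rw [map_smul, map_smul, h]
  -- φ ∘ A₁ = 0 on S3
  have hφA : ∀ s ∈ S3 (n + n), φ (A₁ s) = 0 := by
    intro s hs
    induction hs using Submodule.span_induction with
    | mem x hx =>
      obtain ⟨u, rfl⟩ := hx
      rw [hA₁, map_add, map_add, hφ, hφ, hφ, hskew (u 1) (u 0),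
        hskew (u 2) (u 0), hskew (u 2) (u 1)]
      module
    | zero => simp
    | add x y _ _ h1 h2 => rw [map_add, map_add, h1, h2, add_zero]
    | smul c x _ h => rw [map_smul, map_smul, h, smul_zero]
  -- decomposables in the piece
  have hmem : ∀ a c d : Fin (n + n) → ℝ,
      (lin a * lin c) ⊗ₜ[ℝ] ExteriorAlgebra.ι ℝ d ∈ piece (n + n) 2 1 := by
    intro a c d
    apply Submodule.subset_span
    refine ⟨![a, c], ![d], ?_⟩
    simp [dec, symProd, wdg, Fin.prod_univ_two, List.ofFn_succ]
  -- π maps the piece into S3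
  have hπS3 : ∀ x ∈ piece (n + n) 2 1, π x ∈ S3 (n + n) := by
    intro x hx
    induction hx using Submodule.span_induction with
    | mem x hx =>
      obtain ⟨u, v, rfl⟩ := hx
      have hd : dec u v = (lin (u 0) * lin (u 1)) ⊗ₜ[ℝ] ExteriorAlgebra.ι ℝ (v 0) := by
        simp [dec, symProd, wdg, Fin.prod_univ_two, List.ofFn_succ]
      rw [hd, hπ]
      refine Submodule.smul_mem _ _ (Submodule.subset_span ⟨![u 0, u 1, v 0], ?_⟩)
      simp
    | zero => simp
    | add x y _ _ h1 h2 => rw [map_add]; exact add_mem h1 h2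
    | smul c x _ h => rw [map_smul]; exact Submodule.smul_mem _ _ h
  -- A₁ maps S3 into the piece
  have hA₁piece : ∀ s ∈ S3 (n + n), A₁ s ∈ piece (n + n) 2 1 := by
    intro s hs
    induction hs using Submodule.span_induction with
    | mem x hx =>
      obtain ⟨u, rfl⟩ := hx
      rw [hA₁]
      exact add_mem (add_mem (hmem _ _ _) (hmem _ _ _)) (hmem _ _ _)
    | zero => simp
    | add x y _ _ h1 h2 => rw [map_add]; exact add_mem h1 h2
    | smul c x _ h => rw [map_smul]; exact Submodule.smul_mem _ _ h
  -- ξ maps into the piece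
  have hξpiece : ∀ v, ξ v ∈ piece (n + n) 2 1 := by
    intro v
    rw [hξ]
    unfold xiF
    exact Submodule.smul_mem _ _ (Submodule.sum_mem _ fun i _ =>
      sub_mem (hmem _ _ _) (hmem _ _ _))
  refine ⟨?_, ?_, ?_, ?_, ?_, ?_, ?_⟩
  · -- π ∘ η = 0
    intro x hx
    simp only [LinearMap.sub_apply, LinearMap.comp_apply, LinearMap.id_apply, map_sub]
    rw [hπA _ (hπS3 x hx), hπξ]
    simp
  · -- φ ∘ η = 0
    intro x hx
    simp only [LinearMap.sub_apply, LinearMap.comp_apply, LinearMap.id_apply, map_sub]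
    rw [hφA _ (hπS3 x hx), hφξ]
    simp
  · -- η = id on ker φ ∩ ker π
    intro x _ hφx hπx
    simp only [LinearMap.sub_apply, LinearMap.comp_apply, LinearMap.id_apply,
      hφx, hπx, map_zero, sub_zero]
  · -- the sum is everything
    apply le_antisymm
    · refine sup_le (sup_le ?_ ?_) ?_
      · rintro x ⟨s, hs, rfl⟩; exact hA₁piece s hs
      · intro x hx; exact hx.1.1
      · rintro x ⟨v, rfl⟩; exact hξpiece v
    · intro x hx
      have hx3 := hπS3 x hx
      have e1 : A₁ (π x) ∈ Submodule.map A₁ (S3 (n + n)) ⊔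
          (piece (n + n) 2 1 ⊓ LinearMap.ker φ ⊓ LinearMap.ker π) ⊔ LinearMap.range ξ :=
        Submodule.mem_sup_left (Submodule.mem_sup_left ⟨π x, hx3, rfl⟩)
      have e3 : ξ (φ x) ∈ Submodule.map A₁ (S3 (n + n)) ⊔
          (piece (n + n) 2 1 ⊓ LinearMap.ker φ ⊓ LinearMap.ker π) ⊔ LinearMap.range ξ :=
        Submodule.mem_sup_right ⟨φ x, rfl⟩
      have e2 : x - A₁ (π x) - ξ (φ x) ∈ Submodule.map A₁ (S3 (n + n)) ⊔
          (piece (n + n) 2 1 ⊓ LinearMap.ker φ ⊓ LinearMap.ker π) ⊔ LinearMap.range ξ := by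
        refine Submodule.mem_sup_left (Submodule.mem_sup_right
          (Submodule.mem_inf.mpr ⟨Submodule.mem_inf.mpr ⟨?_, ?_⟩, ?_⟩))
        · exact sub_mem (sub_mem hx (hA₁piece _ hx3)) (hξpiece _)
        · rw [LinearMap.mem_ker, map_sub, map_sub, hφA _ hx3, hφξ]
          simp
        · rw [LinearMap.mem_ker, map_sub, map_sub, hπA _ hx3, hπξ]
          simp
      have hsum : x = A₁ (π x) + (x - A₁ (π x) - ξ (φ x)) + ξ (φ x) := by abel
      rw [hsum]
      exact add_mem (add_mem e1 e2) e3
  · -- Im A₁ ∩ (A' ⊔ Im ξ) = ⊥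
    rw [eq_bot_iff]
    intro x hx
    obtain ⟨⟨s, hs, rfl⟩, hx2⟩ := hx
    obtain ⟨k, hk, r, hr, hkr⟩ := Submodule.mem_sup.mp hx2
    obtain ⟨v, rfl⟩ := hr
    have h1 : π (A₁ s) = s := hπA s hs
    have h2 : π (A₁ s) = 0 := by
      rw [← hkr, map_add, hπξ, hk.2, add_zero]
    rw [Submodule.mem_bot]
    rw [h2] at h1
    rw [← h1, map_zero]
  · -- A' ∩ (Im A₁ ⊔ Im ξ) = ⊥
    rw [eq_bot_iff]
    intro x hx
    obtain ⟨hxk, hx2⟩ := hx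
    obtain ⟨y, hy, r, hr, hkr⟩ := Submodule.mem_sup.mp hx2
    obtain ⟨s, hs, rfl⟩ := hy
    obtain ⟨v, rfl⟩ := hr
    have h1 : π x = 0 := hxk.2
    have h2 : φ x = 0 := hxk.1.2
    have h3 : s = 0 := by
      have := congrArg π hkr
      rw [map_add, hπA s hs, hπξ, add_zero, h1] at this
      exact this
    have h4 : v = 0 := by
      have := congrArg φ hkr
      rw [map_add, hφA s hs, hφξ, zero_add, h2] at this
      exact this
    rw [Submodule.mem_bot, ← hkr, h3, h4, map_zero, map_zero, add_zero]
  · -- Im ξ ∩ (Im A₁ ⊔ A') = ⊥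
    rw [eq_bot_iff]
    intro x hx
    obtain ⟨⟨v, rfl⟩, hx2⟩ := hx
    obtain ⟨y, hy, k, hk, hkr⟩ := Submodule.mem_sup.mp hx2
    obtain ⟨s, hs, rfl⟩ := hy
    have h4 : v = 0 := by
      have := congrArg φ hkr
      rw [map_add, hφA s hs, hφξ, zero_add] at this
      exact this.symm.trans hk.1.2
    rw [Submodule.mem_bot, h4, map_zero]
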